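/- Let X and Y be sorts in a graded probability space and A ⊆ X × Y measurable with μ(A) > 0. Then there exist measurable sets U ⊆ X and V ⊆ Y such that: (1) μ(A ∩ (U × Y)) > 0; (2) μ((A ∩ (U × Y)) △ (A ∩ (X × V))) = 0; and (3) for any measurable U' ⊆ U with μ(A ∩ (U' × Y)) > 0 and μ(A ∩ ((U \ U') × Y)) > 0, and any measurable V' ⊆ Y, we have μ((A ∩ (U' × Y)) △ (A ∩ (U × V'))) > 0. In particular μ(A ∩ (U × V)) > 0, hence μ(U) > 0 and μ(V) > 0. -/

import Mathlib

open Set MeasureTheory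
open scoped ENNReal symmDiff

set_option linter.unusedSectionVars false

namespace MLSAux

variable {X Y : Type*} [MeasurableSpace X] [MeasurableSpace Y]

/-- `A ∩ (U × Y)` -/
def sX (A : Set (X × Y)) (U : Set X) : Set (X × Y) := A ∩ U ×ˢ univ
/-- `A ∩ (X × V)` -/
def sY (A : Set (X × Y)) (V : Set Y) : Set (X × Y) := A ∩ (univ : Set X) ×ˢ V

lemma sX_subset {A : Set (X × Y)} {U : Set X} : sX A U ⊆ A := inter_subset_left
lemma sY_subset {A : Set (X × Y)} {V : Set Y} : sY A V ⊆ A := inter_subset_left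

lemma measurableSet_sX {A : Set (X × Y)} (hA : MeasurableSet A) {U : Set X}
    (hU : MeasurableSet U) : MeasurableSet (sX A U) :=
  hA.inter (hU.prod MeasurableSet.univ)

lemma measurableSet_sY {A : Set (X × Y)} (hA : MeasurableSet A) {V : Set Y}
    (hV : MeasurableSet V) : MeasurableSet (sY A V) :=
  hA.inter (MeasurableSet.univ.prod hV)

variable (μX : Measure X) (μY : Measure Y)

/-- the family of "good" sets: `U` such that `A ∩ (U × Y)` agrees a.e. with some `A ∩ (X × V)`. -/
def Good (A : Set (X × Y)) (U : Set X) : Prop :=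
  MeasurableSet U ∧ ∃ V : Set Y, MeasurableSet V ∧ (μX.prod μY) (sX A U ∆ sY A V) = 0

variable {μX μY}

section integrals

variable {A : Set (X × Y)}

/-- measure of `A ∩ (U ×ˢ V)` as an integral over `x ∈ U` of the slice measures. -/
lemma meas_inter_prod_left [SFinite μY] (hA : MeasurableSet A) {U : Set X} (hU : MeasurableSet U)
    {V : Set Y} (hV : MeasurableSet V) :
    (μX.prod μY) (A ∩ U ×ˢ V) = ∫⁻ x in U, μY (Prod.mk x ⁻¹' A ∩ V) ∂μX := by
  rw [Measure.prod_apply (hA.inter (hU.prod hV))]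
  have h : ∀ x, μY (Prod.mk x ⁻¹' (A ∩ U ×ˢ V))
      = U.indicator (fun x => μY (Prod.mk x ⁻¹' A ∩ V)) x := by
    intro x
    by_cases hx : x ∈ U
    · rw [indicator_of_mem hx]
      congr 1
      ext y; simp [hx]
    · rw [indicator_of_notMem hx]
      have : Prod.mk x ⁻¹' (A ∩ U ×ˢ V) = ∅ := by ext y; simp [hx]
      simp [this]
  simp_rw [h]
  rw [lintegral_indicator hU]

/-- measure of `A ∩ (U ×ˢ V)` as an integral over `y ∈ V` of the slice measures. -/
lemma meas_inter_prod_right [SFinite μX] [SFinite μY] (hA : MeasurableSet A) {U : Set X} (hU : MeasurableSet U)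
    {V : Set Y} (hV : MeasurableSet V) :
    (μX.prod μY) (A ∩ U ×ˢ V) = ∫⁻ y in V, μX ((fun x => (x, y)) ⁻¹' A ∩ U) ∂μY := by
  rw [Measure.prod_apply_symm (hA.inter (hU.prod hV))]
  have h : ∀ y, μX ((fun x => (x, y)) ⁻¹' (A ∩ U ×ˢ V))
      = V.indicator (fun y => μX ((fun x => (x, y)) ⁻¹' A ∩ U)) y := by
    intro y
    by_cases hy : y ∈ V
    · rw [indicator_of_mem hy]
      congr 1
      ext x; simp [hy]
    · rw [indicator_of_notMem hy]
      have : (fun x => (x, y)) ⁻¹' (A ∩ U ×ˢ V) = ∅ := by ext x; simp [hy]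
      simp [this]
  simp_rw [h]
  rw [lintegral_indicator hV]

end integrals

section pointwise

variable {A : Set (X × Y)}

lemma sX_compl (A : Set (X × Y)) (U : Set X) : sX A Uᶜ = A \ sX A U := by
  ext z; simp [sX] <;> tauto

lemma sY_compl (A : Set (X × Y)) (V : Set Y) : sY A Vᶜ = A \ sY A V := by
  ext z; simp [sY] <;> tauto

lemma sX_iUnion (A : Set (X × Y)) (U : ℕ → Set X) : sX A (⋃ n, U n) = ⋃ n, sX A (U n) := by
  ext z; simp [sX] <;> tauto

lemma sY_iUnion (A : Set (X × Y)) (V : ℕ → Set Y) : sY A (⋃ n, V n) = ⋃ n, sY A (V n) := by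
  ext z; simp [sY] <;> tauto

lemma sX_iInter (A : Set (X × Y)) (U : ℕ → Set X) : sX A (⋂ n, U n) = ⋂ n, sX A (U n) := by
  ext z
  simp only [sX, mem_inter_iff, mem_iInter, mem_prod, mem_univ, and_true]
  exact ⟨fun h i => ⟨h.1, h.2 i⟩, fun h => ⟨(h 0).1, fun i => (h i).2⟩⟩

lemma sY_iInter (A : Set (X × Y)) (V : ℕ → Set Y) : sY A (⋂ n, V n) = ⋂ n, sY A (V n) := by
  ext z
  simp only [sY, mem_inter_iff, mem_iInter, mem_prod, mem_univ, true_and]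
  exact ⟨fun h i => ⟨h.1, h.2 i⟩, fun h => ⟨(h 0).1, fun i => (h i).2⟩⟩

lemma sX_inter (A : Set (X × Y)) (U U' : Set X) : sX A (U ∩ U') = sX A U ∩ sX A U' := by
  ext z; simp [sX] <;> tauto

lemma sY_inter (A : Set (X × Y)) (V V' : Set Y) : sY A (V ∩ V') = sY A V ∩ sY A V' := by
  ext z; simp [sY] <;> tauto

lemma sX_univ (A : Set (X × Y)) : sX A univ = A := by ext z; simp [sX]

lemma sY_univ (A : Set (X × Y)) : sY A univ = A := by ext z; simp [sY]

/-- symmDiff of complements within A -/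
lemma symmDiff_compl_subset {B C : Set (X × Y)} (hB : B ⊆ A) (hC : C ⊆ A) :
    (A \ B) ∆ (A \ C) ⊆ B ∆ C := by
  intro z hz
  simp only [symmDiff_def, sup_eq_union, mem_union, mem_diff] at hz ⊢
  tauto

lemma symmDiff_iUnion_subset {B C : ℕ → Set (X × Y)} :
    (⋃ n, B n) ∆ (⋃ n, C n) ⊆ ⋃ n, B n ∆ C n := by
  intro z hz
  simp only [symmDiff_def, sup_eq_union, mem_union, mem_diff, mem_iUnion] at hz ⊢
  rcases hz with ⟨⟨n, hn⟩, h2⟩ | ⟨⟨n, hn⟩, h2⟩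
  · exact ⟨n, Or.inl ⟨hn, fun h => h2 ⟨n, h⟩⟩⟩
  · exact ⟨n, Or.inr ⟨hn, fun h => h2 ⟨n, h⟩⟩⟩

lemma symmDiff_iInter_subset {B C : ℕ → Set (X × Y)} :
    (⋂ n, B n) ∆ (⋂ n, C n) ⊆ ⋃ n, B n ∆ C n := by
  intro z hz
  simp only [symmDiff_def, sup_eq_union, mem_union, mem_diff, mem_iUnion, mem_iInter] at hz ⊢
  rcases hz with ⟨h1, h2⟩ | ⟨h1, h2⟩
  · push_neg at h2
    obtain ⟨n, hn⟩ := h2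
    exact ⟨n, Or.inl ⟨h1 n, hn⟩⟩
  · push_neg at h2
    obtain ⟨n, hn⟩ := h2
    exact ⟨n, Or.inr ⟨h1 n, hn⟩⟩

lemma symmDiff_inter_subset {B B' C : Set (X × Y)} :
    (B ∩ C) ∆ (B' ∩ C) ⊆ B ∆ B' := by
  intro z hz
  simp only [symmDiff_def, sup_eq_union, mem_union, mem_diff, mem_inter_iff] at hz ⊢
  tauto

end pointwise

section good

variable {A : Set (X × Y)} (hA : MeasurableSet A)

lemma good_univ : Good μX μY A univ :=
  ⟨MeasurableSet.univ, univ, MeasurableSet.univ, by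
    rw [sX_univ, sY_univ, symmDiff_self]; simp⟩

lemma good_compl {U : Set X} (h : Good μX μY A U) : Good μX μY A Uᶜ := by
  obtain ⟨hU, V, hV, h0⟩ := h
  refine ⟨hU.compl, Vᶜ, hV.compl, ?_⟩
  rw [sX_compl, sY_compl]
  exact measure_mono_null (symmDiff_compl_subset sX_subset sY_subset) h0

lemma good_iUnion {U : ℕ → Set X} (h : ∀ n, Good μX μY A (U n)) :
    Good μX μY A (⋃ n, U n) := by
  choose hU V hV h0 using h
  refine ⟨MeasurableSet.iUnion hU, ⋃ n, V n, MeasurableSet.iUnion hV, ?_⟩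
  rw [sX_iUnion, sY_iUnion]
  exact measure_mono_null symmDiff_iUnion_subset (by
    exact measure_iUnion_null h0)

lemma good_iInter {U : ℕ → Set X} (h : ∀ n, Good μX μY A (U n)) :
    Good μX μY A (⋂ n, U n) := by
  choose hU V hV h0 using h
  refine ⟨MeasurableSet.iInter hU, ⋂ n, V n, MeasurableSet.iInter hV, ?_⟩
  rw [sX_iInter, sY_iInter]
  exact measure_mono_null symmDiff_iInter_subset (measure_iUnion_null h0)

lemma good_inter {U U' : Set X} (h : Good μX μY A U) (h' : Good μX μY A U') :
    Good μX μY A (U ∩ U') := by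
  obtain ⟨hU, V, hV, h0⟩ := h
  obtain ⟨hU', V', hV', h0'⟩ := h'
  refine ⟨hU.inter hU', V ∩ V', hV.inter hV', ?_⟩
  rw [sX_inter, sY_inter]
  have : (sX A U ∩ sX A U') ∆ (sY A V ∩ sY A V')
      ⊆ (sX A U ∆ sY A V) ∪ (sX A U' ∆ sY A V') := by
    calc (sX A U ∩ sX A U') ∆ (sY A V ∩ sY A V')
        ⊆ (sX A U ∩ sX A U') ∆ (sY A V ∩ sX A U') ∪ (sY A V ∩ sX A U') ∆ (sY A V ∩ sY A V') :=
          symmDiff_triangle _ _ _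
      _ ⊆ (sX A U ∆ sY A V) ∪ (sX A U' ∆ sY A V') := by
          apply union_subset_union
          · exact symmDiff_inter_subset
          · intro z hz
            have : (sX A U' ∩ sY A V) ∆ (sY A V' ∩ sY A V) ⊆ sX A U' ∆ sY A V' :=
              symmDiff_inter_subset
            apply this
            have e1 : sX A U' ∩ sY A V = sY A V ∩ sX A U' := inter_comm _ _
            have e2 : sY A V' ∩ sY A V = sY A V ∩ sY A V' := inter_comm _ _
            rw [e1, e2]; exact hz
  exact measure_mono_null this (by
    rw [← le_zero_iff]
    calc (μX.prod μY) ((sX A U ∆ sY A V) ∪ (sX A U' ∆ sY A V'))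
        ≤ (μX.prod μY) (sX A U ∆ sY A V) + (μX.prod μY) (sX A U' ∆ sY A V') :=
          measure_union_le _ _
      _ = 0 := by rw [h0, h0']; simp)

lemma good_diff {U U' : Set X} (h : Good μX μY A U) (h' : Good μX μY A U') :
    Good μX μY A (U \ U') := by
  rw [diff_eq]
  exact good_inter h (good_compl h')

end good

section scales

variable (μX μY) (A : Set (X × Y))

/-- slice-measure function on X -/
noncomputable def gsl : X → ℝ≥0∞ := fun x => μY (Prod.mk x ⁻¹' A)

/-- the set where the slice has measure at least 1/(n+1) -/
def Dn (n : ℕ) : Set X := {x | ((n : ℝ≥0∞) + 1)⁻¹ ≤ gsl μY A x}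

/-- measure at scale n -/
noncomputable def rho (n : ℕ) (U : Set X) : ℝ≥0∞ := μX (U ∩ Dn μY A n)

/-- the full trace measure -/
noncomputable def nu (U : Set X) : ℝ≥0∞ := (μX.prod μY) (sX A U)

/-- the X-measure of the U-restricted slice, as a function on Y -/
noncomputable def fsl (U : Set X) : Y → ℝ≥0∞ := fun y => μX ((fun x => (x, y)) ⁻¹' (sX A U))

/-- the canonical witness candidate -/
def Wit (U : Set X) : Set Y := {y | 0 < fsl μX A U y}

variable {μX μY A}

lemma measurable_gsl [SFinite μY] (hA : MeasurableSet A) : Measurable (gsl μY A) :=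
  measurable_measure_prodMk_left hA

lemma measurableSet_Dn [SFinite μY] (hA : MeasurableSet A) (n : ℕ) :
    MeasurableSet (Dn μY A n) :=
  measurableSet_le measurable_const (measurable_gsl hA)

lemma measurable_fsl [SFinite μX] (hA : MeasurableSet A) {U : Set X}
    (hU : MeasurableSet U) : Measurable (fsl μX A U) :=
  measurable_measure_prodMk_right (measurableSet_sX hA hU)

lemma measurableSet_Wit [SFinite μX] (hA : MeasurableSet A) {U : Set X}
    (hU : MeasurableSet U) : MeasurableSet (Wit μX A U) :=
  measurableSet_lt measurable_const (measurable_fsl hA hU)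

lemma fsl_eq (U : Set X) (y : Y) : fsl μX A U y = μX ((fun x => (x, y)) ⁻¹' A ∩ U) := by
  unfold fsl sX
  congr 1
  ext x; simp

lemma nu_eq [SFinite μY] (hA : MeasurableSet A) {U : Set X} (hU : MeasurableSet U) :
    nu μX μY A U = ∫⁻ x in U, gsl μY A x ∂μX := by
  unfold nu sX
  rw [meas_inter_prod_left hA hU MeasurableSet.univ]
  unfold gsl
  congr 1
  ext x
  rw [inter_univ]

lemma rho_mono_scale {m n : ℕ} (h : m ≤ n) (U : Set X) :
    rho μX μY A m U ≤ rho μX μY A n U := by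
  apply measure_mono
  apply inter_subset_inter_right
  intro x hx
  show ((n : ℝ≥0∞) + 1)⁻¹ ≤ gsl μY A x
  exact le_trans (ENNReal.inv_le_inv.2 (add_le_add (Nat.cast_le.2 h) le_rfl)) hx

lemma rho_le_add (n : ℕ) (U S : Set X) :
    rho μX μY A n U ≤ rho μX μY A n (U \ S) + rho μX μY A n S := by
  refine le_trans ?_ (measure_union_le _ _)
  apply measure_mono
  intro x hx
  have hx' : x ∈ U ∧ x ∈ Dn μY A n := hx
  rcases em (x ∈ S) with h | h
  · exact Or.inr ⟨h, hx'.2⟩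
  · exact Or.inl ⟨⟨hx'.1, h⟩, hx'.2⟩

lemma rho_diff_zero {n : ℕ} {U S : Set X} (h : rho μX μY A n S = 0)
    (hpos : 0 < rho μX μY A n U) : 0 < rho μX μY A n (U \ S) := by
  by_contra hc
  push_neg at hc
  have h2 := rho_le_add (μX := μX) (μY := μY) (A := A) n U S
  rw [h, le_zero_iff.1 hc] at h2
  simp at h2
  exact absurd h2 (by simpa using hpos.ne')

lemma nu_pos_of_rho_pos [SFinite μY] (hA : MeasurableSet A) {n : ℕ} {U : Set X}
    (hU : MeasurableSet U) (h : 0 < rho μX μY A n U) : 0 < nu μX μY A U := by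
  rw [nu_eq hA hU]
  have h1 : ((n : ℝ≥0∞) + 1)⁻¹ * rho μX μY A n U ≤ ∫⁻ x in U, gsl μY A x ∂μX := by
    calc ((n : ℝ≥0∞) + 1)⁻¹ * rho μX μY A n U
        = ∫⁻ _ in U ∩ Dn μY A n, ((n : ℝ≥0∞) + 1)⁻¹ ∂μX := by
          rw [setLIntegral_const]
          rfl
      _ ≤ ∫⁻ x in U ∩ Dn μY A n, gsl μY A x ∂μX := by
          apply setLIntegral_mono' (hU.inter (measurableSet_Dn hA n))
          intro x hx
          exact hx.2
      _ ≤ ∫⁻ x in U, gsl μY A x ∂μX := lintegral_mono_set inter_subset_left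
  refine lt_of_lt_of_le ?_ h1
  apply ENNReal.mul_pos
  · exact ENNReal.inv_ne_zero.2 (by finiteness)
  · exact h.ne'

lemma exists_rho_pos [SFinite μY] (hA : MeasurableSet A) {U : Set X}
    (hU : MeasurableSet U) (h : 0 < nu μX μY A U) : ∃ n, 0 < rho μX μY A n U := by
  by_contra hc
  push_neg at hc
  simp only [le_zero_iff] at hc
  have hsup : {x | 0 < gsl μY A x} ⊆ ⋃ n, Dn μY A n := by
    intro x hx
    obtain ⟨n, hn⟩ := ENNReal.exists_inv_nat_lt (a := gsl μY A x) hx.ne'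
    refine mem_iUnion.2 ⟨n, ?_⟩
    show ((n : ℝ≥0∞) + 1)⁻¹ ≤ gsl μY A x
    refine le_trans (le_trans ?_ hn.le) le_rfl
    exact ENNReal.inv_le_inv.2 (by simp)
  have hnull : μX (U ∩ {x | 0 < gsl μY A x}) = 0 := by
    have : U ∩ {x | 0 < gsl μY A x} ⊆ ⋃ n, U ∩ Dn μY A n := by
      intro x hx
      obtain ⟨n, hn⟩ := mem_iUnion.1 (hsup hx.2)
      exact mem_iUnion.2 ⟨n, hx.1, hn⟩
    exact measure_mono_null this (measure_iUnion_null hc)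
  rw [nu_eq hA hU] at h
  have hz : ∫⁻ x in U, gsl μY A x ∂μX = 0 := by
    rw [setLIntegral_eq_zero_iff hU (measurable_gsl hA), ae_iff]
    apply measure_mono_null _ hnull
    intro x hx
    simp only [mem_setOf_eq] at hx
    push_neg at hx
    exact ⟨hx.1, pos_iff_ne_zero.2 hx.2⟩
  rw [hz] at h
  exact lt_irrefl 0 h

end scales

section witness

variable {A : Set (X × Y)}

lemma sX_diff_sY (A : Set (X × Y)) (U : Set X) (Z : Set Y) :
    sX A U \ sY A Z = A ∩ U ×ˢ Zᶜ := by
  ext z; simp [sX, sY] <;> tauto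

lemma sY_diff_sX (A : Set (X × Y)) (U : Set X) (Z : Set Y) :
    sY A Z \ sX A U = A ∩ Uᶜ ×ˢ Z := by
  ext z; simp [sX, sY] <;> tauto

lemma sY_diff_sY (A : Set (X × Y)) (V V' : Set Y) :
    sY A V \ sY A V' = A ∩ (univ : Set X) ×ˢ (V \ V') := by
  ext z; simp [sY] <;> tauto

lemma diff_subset_symmDiff {s t : Set (X × Y)} : s \ t ⊆ s ∆ t := by
  rw [Set.symmDiff_def]; exact subset_union_left

lemma diff_subset_symmDiff' {s t : Set (X × Y)} : t \ s ⊆ s ∆ t := by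
  rw [Set.symmDiff_def]; exact subset_union_right

variable [SFinite μX] [SFinite μY]

/-- refinement of a witness by the canonical witness set -/
lemma witness_refine (hA : MeasurableSet A) {U : Set X} (hU : MeasurableSet U)
    {V : Set Y} (hV : MeasurableSet V)
    (hw : (μX.prod μY) (sX A U ∆ sY A V) = 0) :
    (μX.prod μY) (sX A U ∆ sY A (V ∩ Wit μX A U)) = 0 := by
  have h1 : (μX.prod μY) (A ∩ Uᶜ ×ˢ V) = 0 := by
    rw [← sY_diff_sX]
    exact measure_mono_null diff_subset_symmDiff' hw
  have key : (μX.prod μY) (sY A V \ sY A (V ∩ Wit μX A U)) = 0 := by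
    rw [sY_diff_sY]
    have hVW : V \ (V ∩ Wit μX A U) = V \ Wit μX A U := by
      ext y; simp <;> tauto
    rw [hVW]
    rw [meas_inter_prod_right hA MeasurableSet.univ ((hV.diff (measurableSet_Wit hA hU)))]
    rw [← le_zero_iff]
    calc ∫⁻ y in V \ Wit μX A U, μX ((fun x => (x, y)) ⁻¹' A ∩ univ) ∂μY
        ≤ ∫⁻ y in V \ Wit μX A U, μX ((fun x => (x, y)) ⁻¹' A ∩ Uᶜ) ∂μY := by
          apply setLIntegral_mono' (hV.diff (measurableSet_Wit hA hU))
          intro y hy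
          have hfy : fsl μX A U y = 0 := by
            by_contra hne
            exact hy.2 (pos_iff_ne_zero.2 hne)
          rw [fsl_eq] at hfy
          calc μX ((fun x => (x, y)) ⁻¹' A ∩ univ)
              ≤ μX (((fun x => (x, y)) ⁻¹' A ∩ U) ∪ ((fun x => (x, y)) ⁻¹' A ∩ Uᶜ)) := by
                apply measure_mono
                intro x hx
                rcases em (x ∈ U) with h | h
                · exact Or.inl ⟨hx.1, h⟩
                · exact Or.inr ⟨hx.1, h⟩
            _ ≤ μX ((fun x => (x, y)) ⁻¹' A ∩ U) + μX ((fun x => (x, y)) ⁻¹' A ∩ Uᶜ) :=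
                measure_union_le _ _
            _ = μX ((fun x => (x, y)) ⁻¹' A ∩ Uᶜ) := by rw [hfy, zero_add]
      _ ≤ ∫⁻ y in V, μX ((fun x => (x, y)) ⁻¹' A ∩ Uᶜ) ∂μY := lintegral_mono_set diff_subset
      _ = (μX.prod μY) (A ∩ Uᶜ ×ˢ V) := (meas_inter_prod_right hA hU.compl hV).symm
      _ = 0 := h1
  have hsub : sY A (V ∩ Wit μX A U) ⊆ sY A V := by
    apply inter_subset_inter_right
    exact prod_mono_right inter_subset_left
  have h2 : (μX.prod μY) (sY A V ∆ sY A (V ∩ Wit μX A U)) = 0 := by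
    rw [symmDiff_of_ge hsub]
    exact key
  rw [← le_zero_iff]
  calc (μX.prod μY) (sX A U ∆ sY A (V ∩ Wit μX A U))
      ≤ (μX.prod μY) (sX A U ∆ sY A V) + (μX.prod μY) (sY A V ∆ sY A (V ∩ Wit μX A U)) :=
        measure_symmDiff_le _ _ _
    _ = 0 := by rw [hw, h2, add_zero]

/-- any witness of a set carrying mass at scale n has `μY`-measure at least `1/(n+1)`. -/
lemma witness_large (hA : MeasurableSet A) {U : Set X} (hU : MeasurableSet U)
    {Z : Set Y} (hZ : MeasurableSet Z)
    (hw : (μX.prod μY) (sX A U \ sY A Z) = 0) {n : ℕ}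
    (hpos : 0 < rho μX μY A n U) : ((n : ℝ≥0∞) + 1)⁻¹ ≤ μY Z := by
  by_contra hlt
  push_neg at hlt
  rw [sX_diff_sY, meas_inter_prod_left hA hU hZ.compl] at hw
  have h2 : (((n : ℝ≥0∞) + 1)⁻¹ - μY Z) * μX (U ∩ Dn μY A n)
      ≤ ∫⁻ x in U, μY (Prod.mk x ⁻¹' A ∩ Zᶜ) ∂μX := by
    calc (((n : ℝ≥0∞) + 1)⁻¹ - μY Z) * μX (U ∩ Dn μY A n)
        = ∫⁻ _ in U ∩ Dn μY A n, (((n : ℝ≥0∞) + 1)⁻¹ - μY Z) ∂μX := by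
          rw [setLIntegral_const]
      _ ≤ ∫⁻ x in U ∩ Dn μY A n, μY (Prod.mk x ⁻¹' A ∩ Zᶜ) ∂μX := by
          apply setLIntegral_mono' (hU.inter (measurableSet_Dn hA n))
          intro x hx
          have hx2 : ((n : ℝ≥0∞) + 1)⁻¹ ≤ μY (Prod.mk x ⁻¹' A) := hx.2
          calc ((n : ℝ≥0∞) + 1)⁻¹ - μY Z
              ≤ μY (Prod.mk x ⁻¹' A) - μY Z := tsub_le_tsub_right hx2 _
            _ ≤ μY (Prod.mk x ⁻¹' A \ Z) := le_measure_diff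
            _ = μY (Prod.mk x ⁻¹' A ∩ Zᶜ) := by rw [diff_eq]
      _ ≤ ∫⁻ x in U, μY (Prod.mk x ⁻¹' A ∩ Zᶜ) ∂μX := lintegral_mono_set inter_subset_left
  rw [hw, le_zero_iff] at h2
  have : ((n : ℝ≥0∞) + 1)⁻¹ - μY Z ≠ 0 := (tsub_pos_iff_lt.2 hlt).ne'
  rcases (mul_eq_zero.1 h2) with h | h
  · exact this h
  · exact hpos.ne' h

/-- witnesses of disjoint good sets are a.e. disjoint (one inside its canonical witness). -/
lemma witness_disjoint (hA : MeasurableSet A) {U₁ U₂ : Set X}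
    (hU₁ : MeasurableSet U₁) (hU₂ : MeasurableSet U₂) (hd : Disjoint U₁ U₂)
    {Z₁ Z₂ : Set Y} (hZ₂ : MeasurableSet Z₂)
    (hZ₁W : Z₁ ⊆ Wit μX A U₁)
    (hw₂ : (μX.prod μY) (sY A Z₂ \ sX A U₂) = 0) :
    μY (Z₁ ∩ Z₂) = 0 := by
  rw [sY_diff_sX, meas_inter_prod_right hA hU₂.compl hZ₂] at hw₂
  simp_rw [← fsl_eq] at hw₂
  have hae := (setLIntegral_eq_zero_iff hZ₂ (measurable_fsl hA hU₂.compl)).1 hw₂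
  rw [ae_iff] at hae
  apply measure_mono_null _ hae
  intro y hy
  simp only [mem_setOf_eq]
  intro hcon
  have hz : fsl μX A U₂ᶜ y = 0 := hcon hy.2
  have hpos : 0 < fsl μX A U₁ y := hZ₁W hy.1
  have hle : fsl μX A U₁ y ≤ fsl μX A U₂ᶜ y := by
    rw [fsl_eq, fsl_eq]
    apply measure_mono
    apply inter_subset_inter_right
    exact hd.subset_compl_right
  rw [hz] at hle
  exact (lt_irrefl 0 (lt_of_lt_of_le hpos hle))

end witness

section counting

variable {A : Set (X × Y)} [SFinite μX]

/-- there is no infinite pairwise disjoint family of good sets all carrying mass at scale n,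
when `μY` is a probability measure. -/
lemma no_infinite_family [IsProbabilityMeasure μY] (hA : MeasurableSet A) (n : ℕ)
    (S : ℕ → Set X) (hdisj : Pairwise (Function.onFun Disjoint S))
    (hgood : ∀ i, Good μX μY A (S i)) (hpos : ∀ i, 0 < rho μX μY A n (S i)) : False := by
  have hmS : ∀ i, MeasurableSet (S i) := fun i => (hgood i).1
  choose V hVm hV0 using fun i => (hgood i).2
  set Z : ℕ → Set Y := fun i => V i ∩ Wit μX A (S i) with hZdef
  have hZm : ∀ i, MeasurableSet (Z i) := fun i =>
    (hVm i).inter (measurableSet_Wit hA (hmS i))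
  have hZw : ∀ i, (μX.prod μY) (sX A (S i) ∆ sY A (Z i)) = 0 := fun i =>
    witness_refine hA (hmS i) (hVm i) (hV0 i)
  have hZlarge : ∀ i, ((n : ℝ≥0∞) + 1)⁻¹ ≤ μY (Z i) := by
    intro i
    apply witness_large hA (hmS i) (hZm i) _ (hpos i)
    exact measure_mono_null diff_subset_symmDiff (hZw i)
  have hZdisj : ∀ i j, i ≠ j → μY (Z i ∩ Z j) = 0 := by
    intro i j hij
    apply witness_disjoint hA (hmS i) (hmS j) (hdisj hij) (hZm j)
      (inter_subset_right : Z i ⊆ Wit μX A (S i))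
    exact measure_mono_null diff_subset_symmDiff' (hZw j)
  -- disjointify
  set Z' : ℕ → Set Y := fun i => Z i \ ⋃ j ∈ Finset.range i, Z j with hZ'def
  have hZ'm : ∀ i, MeasurableSet (Z' i) :=
    fun i => (hZm i).diff (MeasurableSet.biUnion (Finset.range i).countable_toSet
      (fun j _ => hZm j))
  have hZ'large : ∀ i, ((n : ℝ≥0∞) + 1)⁻¹ ≤ μY (Z' i) := by
    intro i
    have hnull : μY (Z i ∩ ⋃ j ∈ Finset.range i, Z j) = 0 := by
      have : Z i ∩ ⋃ j ∈ Finset.range i, Z j = ⋃ j ∈ Finset.range i, Z i ∩ Z j := by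
        ext y; simp <;> tauto
      rw [this]
      refine (measure_biUnion_null_iff (Finset.range i).countable_toSet).2 ?_
      intro j hj
      exact hZdisj i j (by simp at hj; omega)
    have : μY (Z i) ≤ μY (Z' i) + μY (Z i ∩ ⋃ j ∈ Finset.range i, Z j) := by
      refine le_trans (measure_mono ?_) (measure_union_le _ _)
      intro y hy
      rcases em (y ∈ ⋃ j ∈ Finset.range i, Z j) with h | h
      · exact Or.inr ⟨hy, h⟩
      · exact Or.inl ⟨hy, h⟩
    rw [hnull, add_zero] at this
    exact le_trans (hZlarge i) this
  have hZ'disj : Pairwise (Function.onFun Disjoint Z') := by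
    have key : ∀ i j, i < j → Disjoint (Z' i) (Z' j) := by
      intro i j hij
      apply Set.disjoint_left.2
      intro y hyi hyj
      exact hyj.2 (Set.mem_biUnion (Finset.mem_range.2 hij) hyi.1)
    intro i j hij
    rcases lt_or_gt_of_ne hij with h | h
    · exact key i j h
    · exact (key j i h).symm
  have hsum : ∑' i, μY (Z' i) = μY (⋃ i, Z' i) := (measure_iUnion hZ'disj hZ'm).symm
  have htop : (∑' _ : ℕ, ((n : ℝ≥0∞) + 1)⁻¹) = ∞ :=
    ENNReal.tsum_const_eq_top_of_ne_zero (ENNReal.inv_ne_zero.2 (by finiteness))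
  have : (∞ : ℝ≥0∞) ≤ μY (⋃ i, Z' i) := by
    rw [← hsum, ← htop]
    exact ENNReal.tsum_le_tsum hZ'large
  have hle : μY (⋃ i, Z' i) ≤ 1 := prob_le_one
  rw [top_le_iff.1 this] at hle
  exact absurd hle (by simp)

end counting

section atoms

variable {A : Set (X × Y)} [SFinite μX]

variable (μX μY A) in
/-- `T` is an atom at scale `n`: no good subset can split off positive mass at scale `n`. -/
def AtomAt (n : ℕ) (T : Set X) : Prop :=
  ∀ S, Good μX μY A S → S ⊆ T → 0 < rho μX μY A n S → rho μX μY A n (T \ S) = 0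

/-- abstract recursion: one cannot indefinitely split off good pieces of positive mass. -/
lemma no_bad_sequence [IsProbabilityMeasure μY] (hA : MeasurableSet A) (m n : ℕ)
    {U : Set X} (hUg : Good μX μY A U) (hpos : 0 < rho μX μY A n U)
    (hstep : ∀ T, T ⊆ U → Good μX μY A T → 0 < rho μX μY A n T →
      ∃ S, (Good μX μY A S ∧ S ⊆ T ∧ 0 < rho μX μY A m S) ∧ 0 < rho μX μY A n (T \ S)) :
    False := by
  classical
  choose! F hF using hstep
  let R : ℕ → Set X := fun k => Nat.rec U (fun _ T => T \ F T) k
  have hRsucc : ∀ k, R (k + 1) = R k \ F (R k) := fun k => rfl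
  have hinv : ∀ k, R k ⊆ U ∧ Good μX μY A (R k) ∧ 0 < rho μX μY A n (R k) := by
    intro k
    induction k with
    | zero => exact ⟨subset_rfl, hUg, hpos⟩
    | succ k ih =>
      obtain ⟨h1, h2, h3⟩ := ih
      have h4 := hF (R k) h1 h2 h3
      rw [hRsucc]
      exact ⟨diff_subset.trans h1, good_diff h2 h4.1.1, h4.2⟩
  let P : ℕ → Set X := fun k => F (R k)
  have hPspec : ∀ k, Good μX μY A (P k) ∧ P k ⊆ R k ∧ 0 < rho μX μY A m (P k) := by
    intro k
    obtain ⟨h1, h2, h3⟩ := hinv k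
    obtain ⟨⟨g1, g2, g3⟩, _⟩ := hF (R k) h1 h2 h3
    exact ⟨g1, g2, g3⟩
  have hRmono : ∀ k, R (k + 1) ⊆ R k := fun k => by rw [hRsucc]; exact diff_subset
  have hRle : ∀ k l, k ≤ l → R l ⊆ R k := by
    intro k l h
    induction l with
    | zero =>
      have : k = 0 := Nat.le_zero.1 h
      rw [this]
    | succ l ih =>
      rcases Nat.lt_or_ge k (l + 1) with h' | h'
      · exact (hRmono l).trans (ih (Nat.lt_succ_iff.1 h'))
      · have : k = l + 1 := le_antisymm h h'
        rw [this]
  have hPdisj : Pairwise (Function.onFun Disjoint P) := by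
    have key : ∀ i j, i < j → Disjoint (P i) (P j) := by
      intro i j hij
      have hsub : P j ⊆ R (i + 1) := (hPspec j).2.1.trans (hRle (i + 1) j hij)
      rw [hRsucc] at hsub
      exact Set.disjoint_left.2 fun x hxi hxj => (hsub hxj).2 hxi
    intro i j hij
    rcases lt_or_gt_of_ne hij with h | h
    · exact key i j h
    · exact (key j i h).symm
  exact no_infinite_family hA m P hPdisj (fun i => (hPspec i).1) (fun i => (hPspec i).2.2)

/-- atoms at every scale exist below any good set of positive mass at that scale. -/
lemma exists_atom [IsProbabilityMeasure μY] (hA : MeasurableSet A) (n : ℕ) {U : Set X}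
    (hUg : Good μX μY A U) (hpos : 0 < rho μX μY A n U) :
    ∃ T, T ⊆ U ∧ Good μX μY A T ∧ 0 < rho μX μY A n T ∧ AtomAt μX μY A n T := by
  by_contra hcon
  push_neg at hcon
  refine no_bad_sequence hA n n hUg hpos ?_
  intro T hTU hTg hTpos
  have hnat := hcon T hTU hTg hTpos
  unfold AtomAt at hnat
  push_neg at hnat
  obtain ⟨S, hSg, hST, hSpos, hne⟩ := hnat
  exact ⟨S, ⟨hSg, hST, hSpos⟩, pos_iff_ne_zero.2 hne⟩

/-- below an atom at scale `n` with positive mass, one finds an atom at scale `n+1`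
carrying all the scale-`n` mass. -/
lemma exists_atom_step [IsProbabilityMeasure μY] (hA : MeasurableSet A) (n : ℕ) {T : Set X}
    (hTg : Good μX μY A T) (hatom : AtomAt μX μY A n T) (hpos : 0 < rho μX μY A n T) :
    ∃ T', T' ⊆ T ∧ Good μX μY A T' ∧ AtomAt μX μY A (n + 1) T' ∧
      0 < rho μX μY A (n + 1) T' ∧ rho μX μY A n (T \ T') = 0 := by
  have claim : ∃ T', T' ⊆ T ∧ Good μX μY A T' ∧ AtomAt μX μY A (n + 1) T' ∧
      0 < rho μX μY A n T' := by
    by_contra hcon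
    push_neg at hcon
    refine no_bad_sequence hA (n + 1) n hTg hpos ?_
    intro Tk hTkT hTkg hTkpos
    have hTk1 : 0 < rho μX μY A (n + 1) Tk :=
      lt_of_lt_of_le hTkpos (rho_mono_scale (Nat.le_succ n) Tk)
    obtain ⟨S, hST, hSg, hSpos, hSatom⟩ := exists_atom hA (n + 1) hTkg hTk1
    have hSn : rho μX μY A n S = 0 := by
      by_contra hne
      exact absurd (hcon S (hST.trans hTkT) hSg hSatom)
        (by push_neg; exact pos_iff_ne_zero.2 hne)
    exact ⟨S, ⟨hSg, hST, hSpos⟩, rho_diff_zero hSn hTkpos⟩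
  obtain ⟨T', hT'T, hT'g, hT'atom, hT'pos⟩ := claim
  refine ⟨T', hT'T, hT'g, hT'atom,
    lt_of_lt_of_le hT'pos (rho_mono_scale (Nat.le_succ n) T'), ?_⟩
  exact hatom T' hT'g hT'T hT'pos

end atoms

section chain

variable {A : Set (X × Y)}

lemma rho_mono_set {n : ℕ} {s t : Set X} (h : s ⊆ t) :
    rho μX μY A n s ≤ rho μX μY A n t :=
  measure_mono (inter_subset_inter_left _ h)

lemma rho_iUnion_null {n : ℕ} {B : ℕ → Set X}
    (h : ∀ k, rho μX μY A n (B k) = 0) : rho μX μY A n (⋃ k, B k) = 0 := by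
  unfold rho at *
  rw [iUnion_inter]
  exact measure_iUnion_null h

/-- main construction: a good set of positive trace measure which is an atom for
the trace measure. -/
lemma exists_nu_atom [IsProbabilityMeasure μX] [IsProbabilityMeasure μY]
    (hA : MeasurableSet A) (hA0 : 0 < (μX.prod μY) A) :
    ∃ U : Set X, Good μX μY A U ∧ 0 < nu μX μY A U ∧
      ∀ S, Good μX μY A S → S ⊆ U → 0 < nu μX μY A S → nu μX μY A (U \ S) = 0 := by
  classical
  have hnuuniv : 0 < nu μX μY A univ := by
    unfold nu
    rw [sX_univ]
    exact hA0
  obtain ⟨n₀, hn₀⟩ := exists_rho_pos hA MeasurableSet.univ hnuuniv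
  obtain ⟨T₀, _, hT₀g, hT₀pos, hT₀atom⟩ := exists_atom hA n₀ (good_univ (A := A)) hn₀
  -- step function
  have hstep : ∀ n T, Good μX μY A T → AtomAt μX μY A n T → 0 < rho μX μY A n T →
      ∃ T', (T' ⊆ T ∧ Good μX μY A T' ∧ AtomAt μX μY A (n + 1) T' ∧
        0 < rho μX μY A (n + 1) T') ∧ rho μX μY A n (T \ T') = 0 := by
    intro n T h1 h2 h3
    obtain ⟨T', a, b, c, d, e⟩ := exists_atom_step hA n h1 h2 h3
    exact ⟨T', ⟨a, b, c, d⟩, e⟩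
  choose! G hG using hstep
  let T : ℕ → Set X := fun k => Nat.rec T₀ (fun k Tk => G (n₀ + k) Tk) k
  have hTsucc : ∀ k, T (k + 1) = G (n₀ + k) (T k) := fun k => rfl
  have hinv : ∀ k, Good μX μY A (T k) ∧ AtomAt μX μY A (n₀ + k) (T k) ∧
      0 < rho μX μY A (n₀ + k) (T k) := by
    intro k
    induction k with
    | zero => exact ⟨hT₀g, hT₀atom, hT₀pos⟩
    | succ k ih =>
      obtain ⟨h1, h2, h3⟩ := ih
      obtain ⟨⟨_, g2, g3, g4⟩, _⟩ := hG (n₀ + k) (T k) h1 h2 h3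
      rw [hTsucc]
      exact ⟨g2, by rw [show n₀ + (k + 1) = n₀ + k + 1 from rfl]; exact g3, by rw [show n₀ + (k + 1) = n₀ + k + 1 from rfl]; exact g4⟩
  have hTsub : ∀ k, T (k + 1) ⊆ T k := by
    intro k
    obtain ⟨h1, h2, h3⟩ := hinv k
    rw [hTsucc]
    exact (hG (n₀ + k) (T k) h1 h2 h3).1.1
  have hTnull : ∀ k, rho μX μY A (n₀ + k) (T k \ T (k + 1)) = 0 := by
    intro k
    obtain ⟨h1, h2, h3⟩ := hinv k
    rw [hTsucc]
    exact (hG (n₀ + k) (T k) h1 h2 h3).2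
  have hTle : ∀ k l, k ≤ l → T l ⊆ T k := by
    intro k l h
    induction l with
    | zero => rw [Nat.le_zero.1 h]
    | succ l ih =>
      rcases Nat.lt_or_ge k (l + 1) with h' | h'
      · exact (hTsub l).trans (ih (Nat.lt_succ_iff.1 h'))
      · rw [le_antisymm h h']
  refine ⟨⋂ k, T k, good_iInter (fun k => (hinv k).1), ?_, ?_⟩
  · -- positive trace measure
    have hdiffnull : rho μX μY A n₀ (T 0 \ ⋂ k, T k) = 0 := by
      have hdecomp : T 0 \ ⋂ k, T k ⊆ ⋃ j, (T j \ T (j + 1)) := by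
        intro x hx
        by_contra hc
        simp only [mem_iUnion, mem_diff, not_exists, not_and, not_not] at hc
        have hall : ∀ k, x ∈ T k := by
          intro k
          induction k with
          | zero => exact hx.1
          | succ k ih => exact hc k ih
        exact hx.2 (mem_iInter.2 hall)
      apply measure_mono_null (inter_subset_inter_left _ hdecomp)
      have : rho μX μY A n₀ (⋃ j, (T j \ T (j + 1))) = 0 := by
        apply rho_iUnion_null
        intro j
        have := hTnull j
        have hle := rho_mono_scale (μX := μX) (μY := μY) (A := A)
          (Nat.le_add_right n₀ j) (T j \ T (j + 1))
        rw [this] at hle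
        exact le_zero_iff.1 hle
      exact this
    have hpos0 : 0 < rho μX μY A n₀ (T 0) := by simpa using (hinv 0).2.2
    have := rho_diff_zero hdiffnull hpos0
    have heq : T 0 \ (T 0 \ ⋂ k, T k) = ⋂ k, T k := by
      apply diff_diff_cancel_left
      exact iInter_subset _ 0
    rw [heq] at this
    exact nu_pos_of_rho_pos hA (good_iInter (fun k => (hinv k).1)).1 this
  · -- atom property
    intro S hSg hSsub hSpos
    by_contra hne
    have hSpos' : 0 < nu μX μY A ((⋂ k, T k) \ S) := pos_iff_ne_zero.2 hne
    have hSm : MeasurableSet S := hSg.1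
    have hGdm : Good μX μY A ((⋂ k, T k) \ S) :=
      good_diff (good_iInter (fun k => (hinv k).1)) hSg
    obtain ⟨j, hj⟩ := exists_rho_pos hA hSm hSpos
    obtain ⟨j', hj'⟩ := exists_rho_pos hA hGdm.1 hSpos'
    set k := max j j' with hk
    set m := n₀ + k with hm
    have hmj : j ≤ m := le_trans (le_max_left _ _) (Nat.le_add_left _ _)
    have hmj' : j' ≤ m := le_trans (le_max_right _ _) (Nat.le_add_left _ _)
    have h1 : 0 < rho μX μY A m S := lt_of_lt_of_le hj (rho_mono_scale hmj S)
    have h2 : 0 < rho μX μY A m ((⋂ k, T k) \ S) :=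
      lt_of_lt_of_le hj' (rho_mono_scale hmj' _)
    have hatomk := (hinv k).2.1
    have h3 : rho μX μY A m (T k \ S) = 0 :=
      hatomk S hSg (hSsub.trans (iInter_subset _ k)) h1
    have h4 : (⋂ i, T i) \ S ⊆ T k \ S :=
      diff_subset_diff_left (iInter_subset _ k)
    have := le_trans (rho_mono_set h4) (le_of_eq h3)
    rw [le_zero_iff] at this
    rw [this] at h2
    exact lt_irrefl 0 h2

end chain

end MLSAux

open MLSAux

/-- Maximal local symmetrization: for a positive-measure `A ⊆ X × Y` there are measurable
`U ⊆ X`, `V ⊆ Y` with `A ∩ (U × Y)` of positive measure and equal (up to measure zero) to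
`A ∩ (X × V)`, such that no further subdivision of `U` keeps this symmetry. -/
theorem maximal_local_symmetrization
    {X Y : Type*} [MeasurableSpace X] [MeasurableSpace Y]
    (μX : Measure X) (μY : Measure Y)
    [IsProbabilityMeasure μX] [IsProbabilityMeasure μY]
    (A : Set (X × Y)) (hA : MeasurableSet A) (hA0 : 0 < (μX.prod μY) A) :
    ∃ U : Set X, ∃ V : Set Y, MeasurableSet U ∧ MeasurableSet V ∧
      0 < (μX.prod μY) (A ∩ (U ×ˢ (univ : Set Y))) ∧
      (μX.prod μY) ((A ∩ (U ×ˢ (univ : Set Y))) ∆ (A ∩ ((univ : Set X) ×ˢ V))) = 0 ∧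
      (∀ U' : Set X, MeasurableSet U' → U' ⊆ U →
        0 < (μX.prod μY) (A ∩ (U' ×ˢ (univ : Set Y))) →
        0 < (μX.prod μY) (A ∩ ((U \ U') ×ˢ (univ : Set Y))) →
        ∀ V' : Set Y, MeasurableSet V' →
          0 < (μX.prod μY) ((A ∩ (U' ×ˢ (univ : Set Y))) ∆ (A ∩ (U ×ˢ V')))) ∧
      0 < (μX.prod μY) (A ∩ (U ×ˢ V)) ∧ 0 < μX U ∧ 0 < μY V := by
  obtain ⟨U, hUg, hUpos, hUatom⟩ := exists_nu_atom hA hA0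
  obtain ⟨hUm, V, hVm, hw⟩ := hUg
  have hUpos' : 0 < (μX.prod μY) (A ∩ U ×ˢ (univ : Set Y)) := hUpos
  -- A ∩ U ×ˢ V has positive measure
  have hinter : A ∩ U ×ˢ V = sX A U ∩ sY A V := by
    ext z; simp [sX, sY] <;> tauto
  have hdn : (μX.prod μY) (sX A U \ sY A V) = 0 :=
    measure_mono_null diff_subset_symmDiff hw
  have hle : (μX.prod μY) (sX A U)
      ≤ (μX.prod μY) (sX A U ∩ sY A V) + (μX.prod μY) (sX A U \ sY A V) := by
    refine le_trans (measure_mono ?_) (measure_union_le _ _)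
    intro z hz
    rcases em (z ∈ sY A V) with h | h
    · exact Or.inl ⟨hz, h⟩
    · exact Or.inr ⟨hz, h⟩
  rw [hdn, add_zero] at hle
  have hIpos : 0 < (μX.prod μY) (A ∩ U ×ˢ V) := by
    rw [hinter]
    exact lt_of_lt_of_le hUpos' hle
  -- μX U and μY V positive
  have hXpos : 0 < μX U := by
    refine lt_of_lt_of_le hUpos' ?_
    calc (μX.prod μY) (A ∩ U ×ˢ (univ : Set Y))
        ≤ (μX.prod μY) (U ×ˢ (univ : Set Y)) := measure_mono inter_subset_right
      _ = μX U * μY univ := Measure.prod_prod _ _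
      _ = μX U := by simp
  have hYpos : 0 < μY V := by
    refine lt_of_lt_of_le hIpos ?_
    calc (μX.prod μY) (A ∩ U ×ˢ V)
        ≤ (μX.prod μY) ((univ : Set X) ×ˢ V) := by
          apply measure_mono
          intro z hz
          exact ⟨trivial, hz.2.2⟩
      _ = μX univ * μY V := Measure.prod_prod _ _
      _ = μY V := by simp
  refine ⟨U, V, hUm, hVm, hUpos', hw, ?_, hIpos, hXpos, hYpos⟩
  -- maximality
  intro U' hU'm hU'sub hpos1 hpos2 V' hV'm
  by_contra hc
  push_neg at hc
  rw [le_zero_iff] at hc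
  have hU'good : Good μX μY A U' := by
    refine ⟨hU'm, V ∩ V', hVm.inter hV'm, ?_⟩
    rw [← le_zero_iff]
    calc (μX.prod μY) (sX A U' ∆ sY A (V ∩ V'))
        ≤ (μX.prod μY) (sX A U' ∆ (A ∩ U ×ˢ V'))
          + (μX.prod μY) ((A ∩ U ×ˢ V') ∆ sY A (V ∩ V')) := measure_symmDiff_le _ _ _
      _ = 0 := by
          have hc' : (μX.prod μY) (sX A U' ∆ (A ∩ U ×ˢ V')) = 0 := hc
          rw [hc', zero_add]
          have he1 : A ∩ U ×ˢ V' = sX A U ∩ sY A V' := by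
            ext z; simp [sX, sY] <;> tauto
          have he2 : sY A (V ∩ V') = sY A V ∩ sY A V' := sY_inter A V V'
          rw [he1, he2]
          exact measure_mono_null symmDiff_inter_subset hw
  have hzero := hUatom U' hU'good hU'sub hpos1
  have hpos2' : 0 < nu μX μY A (U \ U') := hpos2
  rw [hzero] at hpos2'
  exact lt_irrefl 0 hpos2'
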